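/- Let Γ be a loopless connected finite directed multigraph with chain structure 𝐧, let w₀ be an admissible multidegree on (Γ, 𝐧), and let w ∈ V(G(w₀)). (a) If P(w, v₁, …, v_m) is a minimal path in G(w₀) from w to some w', then m and the vertices v₁, …, v_m are uniquely determined by w and w' up to reordering. (b) Two paths P(w, v₁, …, v_m) and P(w, v'₁, …, v'_{m'}) have the same endpoint if and only if there is an integer k such that for every vertex u of Γ, the multiplicity of u among v'₁, …, v'_{m'} minus the multiplicity of u among v₁, …, v_m equals k. -/

import Mathlib

open scoped Classical


-- ediv step lemma
lemma ediv_step (N x : ℤ) (hN : 0 < N) : (x+1)/N - x/N = if N ∣ x + 1 then 1 else 0 := by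
  obtain ⟨q, r, hr0, hrN, rfl⟩ : ∃ q r : ℤ, 0 ≤ r ∧ r < N ∧ x = N * q + r :=
    ⟨x / N, x % N, Int.emod_nonneg x hN.ne', Int.emod_lt_of_pos x hN, by
      exact (Int.mul_ediv_add_emod x N).symm⟩
  have h1 : (N * q + r) / N = q + r / N := by
    rw [add_comm (N*q) r, mul_comm N q, Int.add_mul_ediv_right _ _ hN.ne', add_comm]
  have h2 : (N * q + r + 1) / N = q + (r + 1) / N := by
    rw [show N * q + r + 1 = r + 1 + q * N by ring, Int.add_mul_ediv_right _ _ hN.ne',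
      add_comm]
  have hrdiv : r / N = 0 := Int.ediv_eq_zero_of_lt hr0 hrN
  by_cases hd : r + 1 = N
  · have : N ∣ N * q + r + 1 := ⟨q + 1, by rw [← hd]; ring⟩
    simp [this, h1, h2, hrdiv, hd, Int.ediv_self hN.ne']
  · have hlt : r + 1 < N := lt_of_le_of_ne (by omega) hd
    have : ¬ N ∣ N * q + r + 1 := by
      rintro ⟨c, hc⟩
      have : r + 1 = N * (c - q) := by linarith [hc]
      rcases (le_or_gt (c - q) 0) with h | h
      · nlinarith
      · nlinarith [Int.le_of_lt h]
    simp [this, h1, h2, hrdiv, Int.ediv_eq_zero_of_lt (by omega) hlt]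

lemma ediv_add_self (N x : ℤ) (hN : N ≠ 0) : (x + N) / N = x / N + 1 := by
  simpa using Int.add_mul_ediv_right x 1 hN


namespace LLS

variable {V E : Type*}

/-- `σ(e,v)`: `1` if `v` is the tail of `e`, `-1` if `v` is the head of `e`, `0` otherwise. -/
noncomputable def sigma (tail head : E → V) (e : E) (v : V) : ℤ :=
  if tail e = v then 1 else if head e = v then -1 else 0

/-- The endpoint of `e` other than `v` (for `e` adjacent to `v`). -/
noncomputable def otherEnd (tail head : E → V) (e : E) (v : V) : V :=
  if tail e = v then head e else tail e

/-- The multigraph is loopless. -/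
def Loopless (tail head : E → V) : Prop := ∀ e, tail e ≠ head e

/-- The multigraph is connected. -/
def MGConnected (tail head : E → V) : Prop :=
  ∀ u v : V, Relation.ReflTransGen
    (fun a b => ∃ e, (tail e = a ∧ head e = b) ∨ (tail e = b ∧ head e = a)) u v

/-- An admissible multidegree on `(Γ, 𝐧)`: a function `V(Γ) → ℤ` together with an
element `μ(e) ∈ ℤ/𝐧(e)ℤ` for each edge `e`. -/
structure AdmMD (V E : Type*) (n : E → ℕ) where
  wV : V → ℤ
  mu : ∀ e : E, ZMod (n e)

section FinGraph

variable [Fintype V] [Fintype E] [DecidableEq V] [DecidableEq E]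

/-- The twist of an admissible multidegree at a vertex `v`. -/
noncomputable def twist (tail head : E → V) (n : E → ℕ) (w : AdmMD V E n) (v : V) :
    AdmMD V E n where
  wV u := w.wV u
    - (if u = v then ((Finset.univ.filter fun e : E =>
        sigma tail head e v ≠ 0 ∧ w.mu e = 0).card : ℤ) else 0)
    + ((Finset.univ.filter fun e : E => sigma tail head e v ≠ 0 ∧
        w.mu e + (sigma tail head e v : ZMod (n e)) = 0 ∧
        otherEnd tail head e v = u).card : ℤ)
  mu e := w.mu e + (sigma tail head e v : ZMod (n e))

/-- The negative twist of an admissible multidegree at a vertex `v`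
(the inverse of `twist`). -/
noncomputable def negTwist (tail head : E → V) (n : E → ℕ) (w : AdmMD V E n) (v : V) :
    AdmMD V E n where
  wV u := w.wV u
    + (if u = v then ((Finset.univ.filter fun e : E => sigma tail head e v ≠ 0 ∧
        w.mu e - (sigma tail head e v : ZMod (n e)) = 0).card : ℤ) else 0)
    - ((Finset.univ.filter fun e : E => sigma tail head e v ≠ 0 ∧
        w.mu e = 0 ∧ otherEnd tail head e v = u).card : ℤ)
  mu e := w.mu e - (sigma tail head e v : ZMod (n e))

/-- An admissible multidegree is concentrated at `v` if there is an ordering of all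
vertices starting with `v` such that composing the negative twists at all previous
vertices makes the multidegree negative at each subsequent vertex. -/
def Concentrated (tail head : E → V) (n : E → ℕ) (w : AdmMD V E n) (v : V) : Prop :=
  ∃ l : List V, l.Nodup ∧ (∀ x : V, x ∈ l) ∧ l.head? = some v ∧
    ∀ (i : ℕ) (h : i < l.length), 0 < i →
      (((l.take i).foldl (negTwist tail head n) w).wV (l.get ⟨i, h⟩)) < 0

/-- `w` is obtained from `w₀` by a finite sequence of twists, i.e. `w ∈ V(G(w₀))`. -/
def TwistSeq (tail head : E → V) (n : E → ℕ) (w₀ w : AdmMD V E n) : Prop :=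
  ∃ l : List V, l.foldl (twist tail head n) w₀ = w

/-- `l` records the successive twist vertices of a minimal path from `w` to `w'`
in `G(w₀)`. -/
def IsMinPath (tail head : E → V) (n : E → ℕ) (w w' : AdmMD V E n) (l : List V) : Prop :=
  l.foldl (twist tail head n) w = w' ∧
    ∀ l' : List V, l'.foldl (twist tail head n) w = w' → l.length ≤ l'.length

/-- The membership condition describing the subgraph `Ḡ(w₀)` of `G(w₀)`:
no minimal path from `w` to `w_v` involves twisting at `v`. -/
def InBarG (tail head : E → V) (n : E → ℕ) (w₀ : AdmMD V E n) (wv : V → AdmMD V E n)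
    (w : AdmMD V E n) : Prop :=
  TwistSeq tail head n w₀ w ∧
    ∀ (v : V) (l : List V), IsMinPath tail head n w (wv v) l → v ∉ l

/-- Edges joining `v` and `u`. -/
noncomputable def edgesBetween (tail head : E → V) (v u : V) : Finset E :=
  Finset.univ.filter fun e => (tail e = v ∧ head e = u) ∨ (head e = v ∧ tail e = u)

/-- Edges adjacent to `v`. -/
noncomputable def edgesAdj (tail head : E → V) (v : V) : Finset E :=
  Finset.univ.filter fun e => tail e = v ∨ head e = v

/-- The change of a divisor effected by a single chip-firing move at `v`. -/
noncomputable def fireDelta (tail head : E → V) (v : V) : V → ℤ := fun u =>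
  ((edgesBetween tail head v u).card : ℤ)
    - (if u = v then ((edgesAdj tail head v).card : ℤ) else 0)

/-- A chip-firing move (twist) at `v`. -/
noncomputable def chipFire (tail head : E → V) (D : V → ℤ) (v : V) : V → ℤ :=
  fun u => D u + fireDelta tail head v u

/-- The inverse of a chip-firing move at `v`. -/
noncomputable def negChipFire (tail head : E → V) (D : V → ℤ) (v : V) : V → ℤ :=
  fun u => D u - fireDelta tail head v u

/-- A divisor (multidegree) on a graph is concentrated at `v`. -/
def ConcentratedDiv (tail head : E → V) (D : V → ℤ) (v : V) : Prop :=
  ∃ l : List V, l.Nodup ∧ (∀ x : V, x ∈ l) ∧ l.head? = some v ∧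
    ∀ (i : ℕ) (h : i < l.length), 0 < i →
      (((l.take i).foldl (negChipFire tail head) D) (l.get ⟨i, h⟩)) < 0

/-- A divisor on a graph is `v₀`-reduced. -/
def VReduced (tail head : E → V) (D : V → ℤ) (v₀ : V) : Prop :=
  (∀ u, u ≠ v₀ → 0 ≤ D u) ∧
    ∀ S : Finset V, S.Nonempty → v₀ ∉ S →
      ∃ v ∈ S, D v < ((Finset.univ.filter fun e : E =>
        (tail e = v ∧ head e ∉ S) ∨ (head e = v ∧ tail e ∉ S)).card : ℤ)

/-- The function `D_{w,v}` on edges of `Γ` determined by a path `l` from `w` to `w_v`. -/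
noncomputable def DFun (tail head : E → V) (n : E → ℕ) (w : AdmMD V E n) (l : List V)
    (v : V) (et : E) : ℤ :=
  (((Finset.univ : Finset (Fin l.length)).filter fun j =>
      l.get j = otherEnd tail head et v ∧
        ((l.take (j.val + 1)).foldl (twist tail head n) w).mu et = 0).card : ℤ)
  - (((Finset.univ : Finset (Fin l.length)).filter fun j =>
      l.get j = v ∧ ((l.take j.val).foldl (twist tail head n) w).mu et = 0).card : ℤ)

end FinGraph

/-- The tail map of the subdivided graph `Γ̃`: the edge `e` of `Γ` is subdivided into
`𝐧(e)` edges `(e, j)`, `j = 0, …, 𝐧(e) - 1`, numbered from the tail of `e`; the new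
vertices over `e` are `(e, i)`, `i = 0, …, 𝐧(e) - 2`, with `(e, i)` being the
`(i+1)`-st new vertex from the tail of `e`. -/
def tailT (tail head : E → V) (n : E → ℕ) :
    (Σ e : E, Fin (n e)) → V ⊕ Σ e : E, Fin (n e - 1) := fun p =>
  if h : p.2.val = 0 then Sum.inl (tail p.1)
  else Sum.inr ⟨p.1, ⟨p.2.val - 1, by have := p.2.isLt; omega⟩⟩

/-- The head map of the subdivided graph `Γ̃`. -/
def headT (tail head : E → V) (n : E → ℕ) :
    (Σ e : E, Fin (n e)) → V ⊕ Σ e : E, Fin (n e - 1) := fun p =>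
  if h : p.2.val = n p.1 - 1 then Sum.inl (head p.1)
  else Sum.inr ⟨p.1, ⟨p.2.val, by have := p.2.isLt; omega⟩⟩

/-- The multidegree on the subdivided graph `Γ̃` induced by an admissible multidegree:
it agrees with `w` on old vertices, is `1` on the `μ(e)`-th new vertex over `e`
when `μ(e) ≠ 0`, and is `0` on all other new vertices. -/
noncomputable def inducedMD (n : E → ℕ) (w : AdmMD V E n) :
    (V ⊕ Σ e : E, Fin (n e - 1)) → ℤ
  | Sum.inl v => w.wV v
  | Sum.inr ⟨e, i⟩ => if (w.mu e).val = i.val + 1 then 1 else 0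

/-- The simple graph `Γ̄` associated to the multigraph `Γ`: same vertices, one edge
between each pair of adjacent vertices. -/
def barGraph (tail head : E → V) : SimpleGraph V where
  Adj u v := u ≠ v ∧ ∃ e, (tail e = u ∧ head e = v) ∨ (tail e = v ∧ head e = u)
  symm := by
    constructor
    intro u v h
    exact ⟨h.1.symm, h.2.imp fun e he => he.symm⟩
  loopless := by
    constructor
    exact fun u h => h.1 rfl


section Aux0
set_option linter.unusedSectionVars false
set_option linter.unusedVariables false
lemma AdmMD.ext' {n : E → ℕ} {w w' : AdmMD V E n} (h1 : ∀ u, w.wV u = w'.wV u)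
    (h2 : ∀ e, w.mu e = w'.mu e) : w = w' := by
  cases w; cases w'
  simp only [AdmMD.mk.injEq]
  exact ⟨funext h1, funext h2⟩

variable [Fintype V] [Fintype E] [DecidableEq V] [DecidableEq E]
variable (tail head : E → V) (n : E → ℕ)

noncomputable def eTH (w : AdmMD V E n) (c : V → ℤ) (e : E) : ℤ :=
  (((w.mu e).val : ℤ) + (c (tail e) - c (head e))) / (n e : ℤ) - ((w.mu e).val : ℤ) / (n e : ℤ)

noncomputable def eTT (w : AdmMD V E n) (c : V → ℤ) (e : E) : ℤ :=
  (((w.mu e).val : ℤ) - 1) / (n e : ℤ) - (((w.mu e).val : ℤ) - 1 + (c (tail e) - c (head e))) / (n e : ℤ)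

noncomputable def bigMu (w : AdmMD V E n) (c : V → ℤ) : ∀ e, ZMod (n e) :=
  fun e => w.mu e + (((c (tail e) - c (head e)) : ℤ) : ZMod (n e))

lemma bigMu_cast (hn : ∀ e, 0 < n e) (w : AdmMD V E n) (c : V → ℤ) (e : E) :
    bigMu tail head n w c e = ((((w.mu e).val : ℤ) + (c (tail e) - c (head e)) : ℤ) : ZMod (n e)) := by
  haveI : NeZero (n e) := ⟨(hn e).ne'⟩
  rw [bigMu, Int.cast_add]
  congr 1
  rw [Int.cast_natCast, ZMod.natCast_rightInverse _]

lemma step_edge (hloop : Loopless tail head) (hn : ∀ e, 0 < n e)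
    (w : AdmMD V E n) (c : V → ℤ) (v u : V) (e : E) :
    (if head e = u then eTH tail head n w (fun x => c x + if x = v then 1 else 0) e else 0)
    + (if tail e = u then eTT tail head n w (fun x => c x + if x = v then 1 else 0) e else 0)
    - (if head e = u then eTH tail head n w c e else 0)
    - (if tail e = u then eTT tail head n w c e else 0)
    + (if u = v then (if (sigma tail head e v ≠ 0 ∧ bigMu tail head n w c e = 0) then (1:ℤ) else 0) else 0)
    - (if (sigma tail head e v ≠ 0 ∧
          bigMu tail head n w c e + (sigma tail head e v : ZMod (n e)) = 0 ∧
          otherEnd tail head e v = u) then (1:ℤ) else 0) = 0 := by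
  have hN : (0:ℤ) < (n e : ℤ) := by exact_mod_cast hn e
  have hmu0 : (bigMu tail head n w c e = 0) ↔
      (n e : ℤ) ∣ ((w.mu e).val : ℤ) + (c (tail e) - c (head e)) := by
    rw [bigMu_cast tail head n hn w c e, ZMod.intCast_zmod_eq_zero_iff_dvd]
  have hmuσ : ∀ t : ℤ, (bigMu tail head n w c e + ((t:ℤ) : ZMod (n e)) = 0) ↔
      (n e : ℤ) ∣ ((w.mu e).val : ℤ) + (c (tail e) - c (head e)) + t := by
    intro t
    rw [bigMu_cast tail head n hn w c e,
      show ((((w.mu e).val : ℤ) + (c (tail e) - c (head e)) : ℤ) : ZMod (n e)) + ((t : ℤ) : ZMod (n e))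
      = ((((w.mu e).val : ℤ) + (c (tail e) - c (head e)) + t : ℤ) : ZMod (n e)) by push_cast; ring,
      ZMod.intCast_zmod_eq_zero_iff_dvd]
  by_cases htv : tail e = v
  · subst htv
    have hhv : head e ≠ tail e := fun h => hloop e h.symm
    have hσ : sigma tail head e (tail e) = 1 := by simp [sigma]
    have hoth : otherEnd tail head e (tail e) = head e := by simp [otherEnd]
    by_cases hhu : head e = u
    · subst hhu
      have htu : tail e ≠ head e := hloop e
      have huv : head e ≠ tail e := fun h => hloop e h.symm
      simp only [if_pos rfl, if_neg htu, if_neg huv, hσ, hoth, eTH, eTT,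
        if_pos rfl, if_neg hhv, hmuσ 1, ne_eq, one_ne_zero, not_false_iff, true_and, and_true, eq_self_iff_true, if_true, add_zero]
      rw [show (↑(w.mu e).val + (c (tail e) + 1 - c (head e))) = ↑(w.mu e).val + (c (tail e) - c (head e)) + 1 from by ring]
      have h1 := ediv_step ((n e : ℤ)) (↑(w.mu e).val + (c (tail e) - c (head e))) hN
      split_ifs at h1 ⊢ <;> linarith
    · by_cases htu : tail e = u
      · subst htu
        simp only [if_neg hhu, if_pos rfl, hσ, hoth, hhu, eTT,
          if_pos rfl, if_neg hhv, hmuσ 1, hmu0, ne_eq, one_ne_zero, not_false_iff, true_and,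
          and_false, if_false, eq_self_iff_true, if_true, add_zero]
        rw [show (↑(w.mu e).val - 1 + (c (tail e) + 1 - c (head e))) = ↑(w.mu e).val + (c (tail e) - c (head e)) from by ring]
        have h1 := ediv_step ((n e : ℤ)) (↑(w.mu e).val - 1 + (c (tail e) - c (head e))) hN
        rw [show ↑(w.mu e).val - 1 + (c (tail e) - c (head e)) + 1 = ↑(w.mu e).val + (c (tail e) - c (head e)) from by ring] at h1
        split_ifs at h1 ⊢ <;> linarith
      · simp only [if_neg hhu, if_neg htu, if_neg (Ne.symm htu), hoth, hhu, and_false, if_false]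
        ring
  · by_cases hhv : head e = v
    · subst hhv
      have hσ : sigma tail head e (head e) = -1 := by simp [sigma, htv]
      have hoth : otherEnd tail head e (head e) = tail e := by simp [otherEnd, htv]
      by_cases hhu : head e = u
      · subst hhu
        have htu : tail e ≠ head e := hloop e
        simp only [if_pos rfl, if_neg htu, hσ, hoth, eTH,
          if_pos rfl, if_neg htv, hmu0, htu, and_false, if_false, ne_eq, neg_eq_zero,
          one_ne_zero, not_false_iff, true_and, eq_self_iff_true, if_true, add_zero]
        rw [show (↑(w.mu e).val + (c (tail e) - (c (head e) + 1))) = ↑(w.mu e).val + (c (tail e) - c (head e)) - 1 from by ring]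
        have h1 := ediv_step ((n e : ℤ)) (↑(w.mu e).val + (c (tail e) - c (head e)) - 1) hN
        rw [show ↑(w.mu e).val + (c (tail e) - c (head e)) - 1 + 1 = ↑(w.mu e).val + (c (tail e) - c (head e)) from by ring] at h1
        split_ifs at h1 ⊢ <;> linarith
      · by_cases htu : tail e = u
        · subst htu
          have huv : tail e ≠ head e := hloop e
          simp only [if_neg hhu, if_pos rfl, if_neg huv, hσ, hoth, eTT,
            if_pos rfl, if_neg htv, hmuσ (-1), ne_eq, neg_eq_zero, one_ne_zero,
            not_false_iff, true_and, and_true, eq_self_iff_true, if_true, add_zero]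
          rw [show (↑(w.mu e).val - 1 + (c (tail e) - (c (head e) + 1))) = ↑(w.mu e).val + (c (tail e) - c (head e)) - 2 from by ring,
            show (↑(w.mu e).val - 1 + (c (tail e) - c (head e))) = ↑(w.mu e).val + (c (tail e) - c (head e)) - 2 + 1 from by ring]
          have h1 := ediv_step ((n e : ℤ)) (↑(w.mu e).val + (c (tail e) - c (head e)) - 2) hN
          rw [show ↑(w.mu e).val + (c (tail e) - c (head e)) + -1 = ↑(w.mu e).val + (c (tail e) - c (head e)) - 2 + 1 from by ring]
          split_ifs at h1 ⊢ <;> linarith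
        · simp only [if_neg hhu, if_neg htu, if_neg (Ne.symm hhu), hoth, htu, and_false, if_false]
          ring
    · have hσ : sigma tail head e v = 0 := by simp [sigma, htv, hhv]
      simp only [hσ, ne_eq, not_true_eq_false, false_and, if_false, eTH, eTT,
        if_neg htv, if_neg hhv, not_not]
      simp only [add_zero, ite_self]
      split_ifs <;> ring

lemma exists_crossing
    (hconn : ∀ u v : V, Relation.ReflTransGen
      (fun a b => ∃ e, (tail e = a ∧ head e = b) ∨ (tail e = b ∧ head e = a)) u v)
    (P : V → Prop) (a b : V) (ha : P a) (hb : ¬ P b) :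
    ∃ e, (P (tail e) ∧ ¬ P (head e)) ∨ (P (head e) ∧ ¬ P (tail e)) := by
  suffices H : ∀ b : V, Relation.ReflTransGen
      (fun a b => ∃ e, (tail e = a ∧ head e = b) ∨ (tail e = b ∧ head e = a)) a b →
      ¬ P b → ∃ e, (P (tail e) ∧ ¬ P (head e)) ∨ (P (head e) ∧ ¬ P (tail e)) from
    H b (hconn a b) hb
  intro b h
  induction h with
  | refl => intro hb; exact absurd ha hb
  | tail hax hxc ih =>
    intro hb
    rename_i x c
    by_cases hPx : P x
    · obtain ⟨e, he⟩ := hxc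
      rcases he with ⟨h1, h2⟩ | ⟨h1, h2⟩
      · exact ⟨e, Or.inl ⟨by rw [h1]; exact hPx, by rw [h2]; exact hb⟩⟩
      · exact ⟨e, Or.inr ⟨by rw [h2]; exact hPx, by rw [h1]; exact hb⟩⟩
    · exact ih hPx

lemma length_eq_sum_count (l : List V) : (l.length : ℤ) = ∑ u : V, (l.count u : ℤ) := by
  induction l with
  | nil => simp
  | cons a l ih =>
    simp only [List.length_cons, List.count_cons, beq_iff_eq]
    push_cast
    rw [Finset.sum_add_distrib]
    simp [← ih, Finset.sum_ite_eq]

noncomputable def bigW (w : AdmMD V E n) (c : V → ℤ) : V → ℤ := fun u =>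
  w.wV u + (∑ e, if head e = u then eTH tail head n w c e else 0)
         + (∑ e, if tail e = u then eTT tail head n w c e else 0)

lemma bigMu_step (hloop : Loopless tail head) (hn : ∀ e, 0 < n e)
    (w : AdmMD V E n) (c : V → ℤ) (v : V) (e : E) :
    bigMu tail head n w c e + ((sigma tail head e v : ℤ) : ZMod (n e))
      = bigMu tail head n w (fun x => c x + if x = v then 1 else 0) e := by
  rw [bigMu_cast tail head n hn w c e, bigMu_cast tail head n hn w _ e]
  rw [← Int.cast_add]
  congr 1
  have : sigma tail head e v + (c (tail e) - c (head e))
      = ((c (tail e) + if tail e = v then 1 else 0)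
        - (c (head e) + if head e = v then 1 else 0)) := by
    unfold sigma
    split_ifs with h1 h2 <;> try ring
    · exact absurd (h1.trans h2.symm) (hloop e)
  push_cast
  linarith [this]

lemma bigW_step (hloop : Loopless tail head) (hn : ∀ e, 0 < n e)
    (w : AdmMD V E n) (c : V → ℤ) (v u : V) :
    bigW tail head n w c u
    - (if u = v then ((Finset.univ.filter fun e : E =>
        sigma tail head e v ≠ 0 ∧ bigMu tail head n w c e = 0).card : ℤ) else 0)
    + ((Finset.univ.filter fun e : E => sigma tail head e v ≠ 0 ∧
        bigMu tail head n w c e + (sigma tail head e v : ZMod (n e)) = 0 ∧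
        otherEnd tail head e v = u).card : ℤ)
    = bigW tail head n w (fun x => c x + if x = v then 1 else 0) u := by
  have key := fun e => step_edge tail head n hloop hn w c v u e
  have hsum : ∑ e : E,
      ((if head e = u then eTH tail head n w (fun x => c x + if x = v then 1 else 0) e else 0)
      + (if tail e = u then eTT tail head n w (fun x => c x + if x = v then 1 else 0) e else 0)
      - (if head e = u then eTH tail head n w c e else 0)
      - (if tail e = u then eTT tail head n w c e else 0)
      + (if u = v then (if (sigma tail head e v ≠ 0 ∧ bigMu tail head n w c e = 0) then (1:ℤ) else 0) else 0)
      - (if (sigma tail head e v ≠ 0 ∧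
            bigMu tail head n w c e + (sigma tail head e v : ZMod (n e)) = 0 ∧
            otherEnd tail head e v = u) then (1:ℤ) else 0)) = 0 :=
    Finset.sum_eq_zero (fun e _ => key e)
  rw [Finset.sum_sub_distrib, Finset.sum_add_distrib, Finset.sum_sub_distrib,
    Finset.sum_sub_distrib, Finset.sum_add_distrib] at hsum
  have hite : ∀ (f : E → ℤ), (∑ e : E, if u = v then f e else 0)
      = if u = v then ∑ e : E, f e else 0 := by
    intro f; split_ifs <;> simp
  rw [hite] at hsum
  have hc1 : ((Finset.univ.filter fun e : E =>
      sigma tail head e v ≠ 0 ∧ bigMu tail head n w c e = 0).card : ℤ)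
      = ∑ e : E, (if (sigma tail head e v ≠ 0 ∧ bigMu tail head n w c e = 0) then (1:ℤ) else 0) := by
    rw [Finset.card_filter]; push_cast; rfl
  have hc2 : ((Finset.univ.filter fun e : E => sigma tail head e v ≠ 0 ∧
      bigMu tail head n w c e + (sigma tail head e v : ZMod (n e)) = 0 ∧
      otherEnd tail head e v = u).card : ℤ)
      = ∑ e : E, (if (sigma tail head e v ≠ 0 ∧
          bigMu tail head n w c e + (sigma tail head e v : ZMod (n e)) = 0 ∧
          otherEnd tail head e v = u) then (1:ℤ) else 0) := by
    rw [Finset.card_filter]; push_cast; rfl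
  rw [hc1, hc2, bigW, bigW]
  linarith [hsum]

lemma twist_step (hloop : Loopless tail head) (hn : ∀ e, 0 < n e)
    (w : AdmMD V E n) (c : V → ℤ) (v : V) :
    twist tail head n (AdmMD.mk (bigW tail head n w c) (bigMu tail head n w c)) v
      = AdmMD.mk (bigW tail head n w (fun x => c x + if x = v then 1 else 0))
          (bigMu tail head n w (fun x => c x + if x = v then 1 else 0)) := by
  apply AdmMD.ext'
  · intro u
    exact bigW_step tail head n hloop hn w c v u
  · intro e
    exact bigMu_step tail head n hloop hn w c v e

lemma foldl_formula (hloop : Loopless tail head) (hn : ∀ e, 0 < n e)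
    (w : AdmMD V E n) (l : List V) :
    l.foldl (twist tail head n) w
      = AdmMD.mk (bigW tail head n w (fun u => (l.count u : ℤ)))
          (bigMu tail head n w (fun u => (l.count u : ℤ))) := by
  induction l using List.reverseRecOn with
  | nil =>
    apply AdmMD.ext'
    · intro u
      simp [bigW, eTH, eTT]
    · intro e
      simp [bigMu]
  | append_singleton l v ih =>
    rw [List.foldl_append, List.foldl_cons, List.foldl_nil, ih,
      twist_step tail head n hloop hn w _ v]
    have hc : (fun u => (((l ++ [v]).count u : ℕ) : ℤ))
        = fun x => ((l.count x : ℕ) : ℤ) + if x = v then 1 else 0 := by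
      funext x
      simp only [List.count_append]
      by_cases hx : x = v
      · subst hx; simp
      · simp [List.count_singleton', hx, Ne.symm hx]
    rw [hc]

lemma M1 (N s y y' : ℤ) (hN : 0 < N) (h : y + N ≤ y') : (s + y)/N - (s + y')/N ≤ -1 := by
  have h2 : s + y + N ≤ s + y' := by linarith
  have h3 := Int.ediv_le_ediv hN h2
  rw [ediv_add_self N (s+y) hN.ne'] at h3
  linarith

lemma counts_const (hloop : Loopless tail head)
    (hconn : ∀ u v : V, Relation.ReflTransGen
      (fun a b => ∃ e, (tail e = a ∧ head e = b) ∨ (tail e = b ∧ head e = a)) u v)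
    (hn : ∀ e, 0 < n e) (w : AdmMD V E n) (c c' : V → ℤ)
    (hW : bigW tail head n w c = bigW tail head n w c')
    (hM : bigMu tail head n w c = bigMu tail head n w c') :
    ∃ k : ℤ, ∀ u : V, c' u - c u = k := by
  have hdvd : ∀ e : E, (n e : ℤ) ∣ ((c' (tail e) - c' (head e)) - (c (tail e) - c (head e))) := by
    intro e
    have h1 : bigMu tail head n w c e = bigMu tail head n w c' e := by rw [hM]
    rw [bigMu_cast tail head n hn w c e, bigMu_cast tail head n hn w c' e] at h1
    rw [← ZMod.intCast_zmod_eq_zero_iff_dvd]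
    push_cast
    push_cast at h1
    have h2 := add_left_cancel h1
    rw [← h2]
    ring
  by_cases hV : IsEmpty V
  · exact ⟨0, fun u => hV.elim u⟩
  rw [not_isEmpty_iff] at hV
  obtain ⟨m, -, hm⟩ := Finset.exists_max_image Finset.univ (fun u => c' u - c u)
    Finset.univ_nonempty
  refine ⟨c' m - c m, ?_⟩
  by_contra hcon
  push_neg at hcon
  obtain ⟨b, hb⟩ := hcon
  -- crossing edge
  obtain ⟨e₀, he₀⟩ := exists_crossing tail head hconn
    (fun u => c' u - c u = c' m - c m) m b rfl hb
  set A : Finset V := Finset.univ.filter (fun u => c' u - c u = c' m - c m) with hA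
  have hmemA : ∀ u, u ∈ A ↔ c' u - c u = c' m - c m := by
    intro u; simp [hA]
  -- pointwise difference of bigW
  have hptwise : ∀ u, (0:ℤ) =
      (∑ e, if head e = u then eTH tail head n w c' e - eTH tail head n w c e else 0)
    + (∑ e, if tail e = u then eTT tail head n w c' e - eTT tail head n w c e else 0) := by
    intro u
    have h0 : bigW tail head n w c' u - bigW tail head n w c u = 0 := by rw [hW]; ring
    rw [bigW, bigW] at h0
    have e1 : ∀ e : E, (if head e = u then eTH tail head n w c' e - eTH tail head n w c e else 0)
        = (if head e = u then eTH tail head n w c' e else 0)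
          - (if head e = u then eTH tail head n w c e else 0) := by
      intro e; split_ifs <;> ring
    have e2 : ∀ e : E, (if tail e = u then eTT tail head n w c' e - eTT tail head n w c e else 0)
        = (if tail e = u then eTT tail head n w c' e else 0)
          - (if tail e = u then eTT tail head n w c e else 0) := by
      intro e; split_ifs <;> ring
    simp_rw [e1, e2]
    rw [Finset.sum_sub_distrib, Finset.sum_sub_distrib]
    linarith
  have hAsum : (0:ℤ) = ∑ e : E,
      ((if head e ∈ A then eTH tail head n w c' e - eTH tail head n w c e else 0)
      + (if tail e ∈ A then eTT tail head n w c' e - eTT tail head n w c e else 0)) := by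
    have h1 : ∑ u ∈ A,
        ((∑ e, if head e = u then eTH tail head n w c' e - eTH tail head n w c e else 0)
        + (∑ e, if tail e = u then eTT tail head n w c' e - eTT tail head n w c e else 0))
        = 0 := Finset.sum_eq_zero (fun u (_ : u ∈ A) => (hptwise u).symm)
    rw [Finset.sum_add_distrib, Finset.sum_comm, Finset.sum_comm (s := A),
      ← Finset.sum_add_distrib] at h1
    refine Eq.symm (Eq.trans ?_ h1)
    apply Finset.sum_congr rfl
    intro e _
    rw [Finset.sum_ite_eq A (head e), Finset.sum_ite_eq A (tail e)]
  -- bounds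
  have hbound : ∀ e : E,
      ((if head e ∈ A then eTH tail head n w c' e - eTH tail head n w c e else 0)
      + (if tail e ∈ A then eTT tail head n w c' e - eTT tail head n w c e else 0))
      ≤ if e = e₀ then -1 else 0 := by
    intro e
    have hNe : (0:ℤ) < (n e : ℤ) := by exact_mod_cast hn e
    by_cases hh : head e ∈ A <;> by_cases ht : tail e ∈ A
    · -- both: difference zero, and e ≠ e₀
      have hδ : c' (tail e) - c' (head e) = c (tail e) - c (head e) := by
        have h1 := (hmemA _).mp hh
        have h2 := (hmemA _).mp ht
        linarith
      have hz1 : eTH tail head n w c' e = eTH tail head n w c e := by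
        rw [eTH, eTH, hδ]
      have hz2 : eTT tail head n w c' e = eTT tail head n w c e := by
        rw [eTT, eTT, hδ]
      have hne : e ≠ e₀ := by
        intro h; subst h
        rcases he₀ with ⟨h1, h2⟩ | ⟨h1, h2⟩
        · exact h2 ((hmemA _).mp hh)
        · exact h2 ((hmemA _).mp ht)
      simp [hh, ht, hz1, hz2, hne]
    · -- head in, tail out: δ' ≤ δ - N
      have h1 := (hmemA _).mp hh
      have h2 : ¬ (c' (tail e) - c (tail e) = c' m - c m) := fun h => ht ((hmemA _).mpr h)
      have h3 : c' (tail e) - c (tail e) < c' m - c m :=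
        lt_of_le_of_ne (hm (tail e) (Finset.mem_univ _)) h2
      have h4 : (c' (tail e) - c' (head e)) - (c (tail e) - c (head e)) < 0 := by linarith
      have h5 : (n e : ℤ) ≤ -((c' (tail e) - c' (head e)) - (c (tail e) - c (head e))) := by
        refine Int.le_of_dvd (by linarith) ?_
        exact (hdvd e).neg_right
      have h6 : (c' (tail e) - c' (head e)) + (n e : ℤ) ≤ (c (tail e) - c (head e)) := by
        linarith
      have h7 := M1 ((n e : ℤ)) (((w.mu e).val : ℤ))
        (c' (tail e) - c' (head e)) (c (tail e) - c (head e)) hNe h6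
      rw [eTH, eTH]
      simp only [hh, ht, if_true, if_false, if_neg ht]
      split_ifs with he <;> linarith
    · -- tail in, head out: δ' ≥ δ + N
      have h1 := (hmemA _).mp ht
      have h2 : ¬ (c' (head e) - c (head e) = c' m - c m) := fun h => hh ((hmemA _).mpr h)
      have h3 : c' (head e) - c (head e) < c' m - c m :=
        lt_of_le_of_ne (hm (head e) (Finset.mem_univ _)) h2
      have h4 : (0:ℤ) < (c' (tail e) - c' (head e)) - (c (tail e) - c (head e)) := by linarith
      have h5 : (n e : ℤ) ≤ (c' (tail e) - c' (head e)) - (c (tail e) - c (head e)) :=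
        Int.le_of_dvd h4 (hdvd e)
      have h6 : (c (tail e) - c (head e)) + (n e : ℤ) ≤ (c' (tail e) - c' (head e)) := by
        linarith
      have h7 := M1 ((n e : ℤ)) (((w.mu e).val : ℤ) - 1)
        (c (tail e) - c (head e)) (c' (tail e) - c' (head e)) hNe h6
      rw [eTT, eTT]
      simp only [hh, ht, if_true, if_false, if_neg hh]
      split_ifs with he <;> linarith
    · -- neither: e ≠ e₀
      have hne : e ≠ e₀ := by
        intro h; subst h
        rcases he₀ with ⟨h1, h2⟩ | ⟨h1, h2⟩
        · exact ht ((hmemA _).mpr h1)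
        · exact hh ((hmemA _).mpr h1)
      simp [hh, ht, hne]
  have hle := Finset.sum_le_sum (fun e (_ : e ∈ Finset.univ) => hbound e)
  rw [Finset.sum_ite_eq' Finset.univ e₀ (fun _ => (-1:ℤ))] at hle
  simp only [Finset.mem_univ, if_true] at hle
  rw [← hAsum] at hle
  linarith

lemma bigW_congr (w : AdmMD V E n) (c c' : V → ℤ)
    (hδ : ∀ e : E, c' (tail e) - c' (head e) = c (tail e) - c (head e)) :
    bigW tail head n w c' = bigW tail head n w c := by
  funext u
  rw [bigW, bigW]
  congr 1
  · congr 1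
    apply Finset.sum_congr rfl
    intro e _
    simp only [eTH, hδ e]
  · apply Finset.sum_congr rfl
    intro e _
    simp only [eTT, hδ e]

lemma bigMu_congr (w : AdmMD V E n) (c c' : V → ℤ)
    (hδ : ∀ e : E, c' (tail e) - c' (head e) = c (tail e) - c (head e)) :
    bigMu tail head n w c' = bigMu tail head n w c := by
  funext e
  rw [bigMu, bigMu, hδ e]

lemma main_iff (hloop : Loopless tail head)
    (hconn : ∀ u v : V, Relation.ReflTransGen
      (fun a b => ∃ e, (tail e = a ∧ head e = b) ∨ (tail e = b ∧ head e = a)) u v)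
    (hn : ∀ e, 0 < n e) (w : AdmMD V E n) (l l' : List V) :
    l.foldl (twist tail head n) w = l'.foldl (twist tail head n) w ↔
      ∃ k : ℤ, ∀ u : V, (l'.count u : ℤ) - (l.count u : ℤ) = k := by
  rw [foldl_formula tail head n hloop hn w l, foldl_formula tail head n hloop hn w l']
  constructor
  · intro h
    have hW : bigW tail head n w (fun u => (l.count u : ℤ))
        = bigW tail head n w (fun u => (l'.count u : ℤ)) := congrArg AdmMD.wV h
    have hM : bigMu tail head n w (fun u => (l.count u : ℤ))
        = bigMu tail head n w (fun u => (l'.count u : ℤ)) := congrArg AdmMD.mu h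
    exact counts_const tail head n hloop hconn hn w _ _ hW hM
  · rintro ⟨k, hk⟩
    have hδ : ∀ e : E, ((l'.count (tail e) : ℤ)) - (l'.count (head e) : ℤ)
        = ((l.count (tail e) : ℤ)) - (l.count (head e) : ℤ) := by
      intro e
      have h1 := hk (tail e)
      have h2 := hk (head e)
      linarith
    rw [bigW_congr tail head n w (fun u => (l.count u : ℤ)) (fun u => (l'.count u : ℤ)) hδ,
      bigMu_congr tail head n w (fun u => (l.count u : ℤ)) (fun u => (l'.count u : ℤ)) hδ]

end Aux0

/-- minimal paths in `G(w₀)` are unique up to reordering, and two paths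
from `w` have the same endpoint iff their vertex multiplicities differ by a constant. -/
theorem statement_0 {V E : Type*} [Fintype V] [Fintype E] [DecidableEq V] [DecidableEq E]
    (tail head : E → V) (n : E → ℕ)
    (hloop : Loopless tail head) (hconn : MGConnected tail head)
    (hn : ∀ e, 0 < n e)
    (w₀ w : AdmMD V E n) (hw : TwistSeq tail head n w₀ w) :
    (∀ (w' : AdmMD V E n) (l l' : List V),
        IsMinPath tail head n w w' l → IsMinPath tail head n w w' l' → l.Perm l') ∧
    (∀ l l' : List V,
        l.foldl (twist tail head n) w = l'.foldl (twist tail head n) w ↔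
          ∃ k : ℤ, ∀ u : V, (l'.count u : ℤ) - (l.count u : ℤ) = k) := by
  constructor
  · intro w' l l' hl hl'
    have heq : l.foldl (twist tail head n) w = l'.foldl (twist tail head n) w :=
      hl.1.trans hl'.1.symm
    obtain ⟨k, hk⟩ := (main_iff tail head n hloop hconn hn w l l').mp heq
    have hlen : l.length = l'.length := le_antisymm (hl.2 l' hl'.1) (hl'.2 l hl.1)
    have hsum2 : ∑ u : V, ((l.count u : ℤ) - (l'.count u : ℤ)) = 0 := by
      rw [Finset.sum_sub_distrib, ← length_eq_sum_count, ← length_eq_sum_count, hlen]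
      ring
    have hsum : ∑ u : V, ((l.count u : ℤ) - (l'.count u : ℤ)) = (-k) * (Fintype.card V : ℤ) := by
      rw [Finset.sum_congr rfl (fun u (_ : u ∈ Finset.univ) => by
        have := hk u; linarith : ∀ u ∈ Finset.univ, ((l.count u : ℤ) - (l'.count u : ℤ)) = -k)]
      rw [Finset.sum_const, Finset.card_univ]
      simp [mul_comm]
    rw [List.perm_iff_count]
    intro a
    have hpos : (0:ℤ) < (Fintype.card V : ℤ) := by
      have : Nonempty V := ⟨a⟩
      exact_mod_cast Fintype.card_pos
    have hk0 : k = 0 := by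
      have h0 : (-k) * (Fintype.card V : ℤ) = 0 := by rw [← hsum, hsum2]
      rcases mul_eq_zero.mp h0 with h | h
      · linarith
      · exact absurd h hpos.ne'
    have h := hk a
    rw [hk0] at h
    exact_mod_cast (sub_eq_zero.mp h).symm
  · intro l l'
    exact main_iff tail head n hloop hconn hn w l l'


end LLS
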